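/- arXiv:2005.05253 — 2 statements merged into one kernel-verified Lean document; each statement's English description precedes it below -/
import Mathlib

section
/- Let u:[0,1]²→[0,1] be a Robinson graphon and let N∈ℕ. Let u^{(N)} be the step graphon obtained by splitting [0,1] into N equal-length intervals I_1,…,I_N and setting u^{(N)} equal to the average (1/(|I_i||I_j|))∫_{I_i×I_j} u on each cell I_i×I_j. Then ‖u − u^{(N)}‖₁ = ∫_{[0,1]²}|u − u^{(N)}| ≤ 7/N. -/
open MeasureTheory Set

/-- A graphon: symmetric, measurable, `[0,1]`-valued on `[0,1]²`. -/
def IsGraphon (w : ℝ → ℝ → ℝ) : Prop :=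
  Measurable (Function.uncurry w) ∧ (∀ x y, w x y = w y x) ∧
    ∀ x y : ℝ, x ∈ Icc (0:ℝ) 1 → y ∈ Icc (0:ℝ) 1 → w x y ∈ Icc (0:ℝ) 1

/-- The Robinson property. -/
def IsRobinson (w : ℝ → ℝ → ℝ) : Prop :=
  ∀ x y z : ℝ, 0 ≤ x → x ≤ y → y ≤ z → z ≤ 1 → w x z ≤ min (w x y) (w y z)

/-- The average value `w̄(S,T)` of `w` over `S × T`. -/
noncomputable def avgOn (w : ℝ → ℝ → ℝ) (S T : Set ℝ) : ℝ :=
  (∫ x in S, ∫ y in T, w x y) / ((volume S).toReal * (volume T).toReal)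

/-- The interval `I_i = ((i-1)/N, i/N]`. -/
noncomputable def cellI (N : ℕ) (i : ℤ) : Set ℝ := Ioc (((i : ℝ) - 1) / N) ((i : ℝ) / N)

/-- The index `i` (namely `⌈Nx⌉`) such that `x ∈ I_i = ((i-1)/N, i/N]`. -/
noncomputable def cellOf (N : ℕ) (x : ℝ) : ℤ := ⌈(N : ℝ) * x⌉

/-- The value `u^{(N)}_{i,j}`: the average of `u` over `I_i × I_j`. -/
noncomputable def stepVal (u : ℝ → ℝ → ℝ) (N : ℕ) (i j : ℤ) : ℝ :=
  avgOn u (cellI N i) (cellI N j)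

/-- The step graphon `u^{(N)}`. -/
noncomputable def stepG (u : ℝ → ℝ → ℝ) (N : ℕ) (x y : ℝ) : ℝ :=
  stepVal u N (cellOf N x) (cellOf N y)

section Basic
variable {N : ℕ} (hN : 1 ≤ N)
include hN

lemma Npos : (0:ℝ) < N := by exact_mod_cast Nat.pos_of_ne_zero (by omega)

lemma mem_cell_iff {x : ℝ} {j : ℤ} : x ∈ cellI N j ↔ cellOf N x = j := by
  have hNpos : (0:ℝ) < N := Npos hN
  simp only [cellI, cellOf, mem_Ioc, Int.ceil_eq_iff]
  rw [div_lt_iff₀ hNpos, le_div_iff₀ hNpos]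
  constructor
  · rintro ⟨h1, h2⟩; constructor <;> nlinarith
  · rintro ⟨h1, h2⟩; constructor <;> nlinarith

lemma vol_cell (j : ℤ) : volume (cellI N j) = ENNReal.ofReal (1 / N) := by
  have hNpos : (0:ℝ) < N := Npos hN
  rw [cellI, Real.volume_Ioc]
  congr 1; field_simp; ring

lemma vol_cell_toReal (j : ℤ) : (volume (cellI N j)).toReal = 1 / N := by
  rw [vol_cell hN j, ENNReal.toReal_ofReal (by positivity)]

lemma cell_subset {j : ℤ} (hj1 : 1 ≤ j) (hj2 : j ≤ N) : cellI N j ⊆ Ioc (0:ℝ) 1 := by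
  have hNpos : (0:ℝ) < N := Npos hN
  apply Ioc_subset_Ioc
  · apply div_nonneg _ hNpos.le; have : (1:ℝ) ≤ (j:ℝ) := by exact_mod_cast hj1
    linarith
  · rw [div_le_one hNpos]; exact_mod_cast hj2

lemma cellOf_mem {x : ℝ} (hx : x ∈ Ioc (0:ℝ) 1) : 1 ≤ cellOf N x ∧ cellOf N x ≤ N := by
  have hNpos : (0:ℝ) < N := Npos hN
  constructor
  · have : (0:ℝ) < N * x := by nlinarith [hx.1]
    exact_mod_cast Int.ceil_pos.mpr this
  · have : (N:ℝ) * x ≤ N := by nlinarith [hx.2]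
    calc cellOf N x ≤ ⌈(N:ℝ)⌉ := Int.ceil_le_ceil this
    _ = N := by simp

lemma Ioc_eq_biUnion : Ioc (0:ℝ) 1 = ⋃ i ∈ Finset.range N, cellI N ((i:ℤ)+1) := by
  ext x
  simp only [mem_iUnion, Finset.mem_range, exists_prop]
  constructor
  · intro hx
    obtain ⟨h1, h2⟩ := cellOf_mem hN hx
    refine ⟨(cellOf N x - 1).toNat, by omega, ?_⟩
    rw [mem_cell_iff hN]; omega
  · rintro ⟨i, hi, hx⟩
    exact cell_subset hN (by omega) (by exact_mod_cast by omega) hx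

lemma integral_Ioc_eq_sum (g : ℝ → ℝ) (hg : IntegrableOn g (Ioc (0:ℝ) 1)) :
    ∫ t in Ioc (0:ℝ) 1, g t = ∑ i ∈ Finset.range N, ∫ t in cellI N ((i:ℤ)+1), g t := by
  rw [Ioc_eq_biUnion hN] at hg ⊢
  exact integral_biUnion_finset _ (fun i _ => measurableSet_Ioc)
    (fun i _ j _ hij => by
      apply Set.disjoint_left.mpr
      intro x hx hx'
      rw [mem_cell_iff hN] at hx hx'
      omega)
    (fun i hi => hg.mono_set (Set.subset_biUnion_of_mem (u := fun i : ℕ => cellI N ((i:ℤ)+1)) hi))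

end Basic

section Est
variable {N : ℕ} (hN : 1 ≤ N)
include hN

lemma cell_nat (i : ℕ) : cellI N ((i:ℤ)+1) = Ioc ((i:ℝ)/N) (((i:ℝ)+1)/N) := by
  simp only [cellI]; push_cast; ring_nf

lemma integrableOn_const_cell (c : ℝ) (j : ℤ) : IntegrableOn (fun _ => c) (cellI N j) := by
  exact integrableOn_const (by rw [vol_cell hN j]; exact ENNReal.ofReal_ne_top)

lemma avg_mem {f : ℝ → ℝ} {m M : ℝ} {j : ℤ}
    (hf : ∀ t ∈ cellI N j, f t ∈ Icc m M) (hint : IntegrableOn f (cellI N j)) :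
    (∫ t in cellI N j, f t) * N ∈ Icc m M := by
  have hNpos : (0:ℝ) < N := Npos hN
  have hvol : (volume (cellI N j)).toReal = 1 / N := vol_cell_toReal hN j
  have h1 : ∫ t in cellI N j, f t ≤ ∫ t in cellI N j, (fun _ => M) t :=
    setIntegral_mono_on hint (integrableOn_const_cell hN M j) measurableSet_Ioc
      (fun t ht => (hf t ht).2)
  have h2 : ∫ t in cellI N j, (fun _ => m) t ≤ ∫ t in cellI N j, f t :=
    setIntegral_mono_on (integrableOn_const_cell hN m j) hint measurableSet_Ioc
      (fun t ht => (hf t ht).1)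
  rw [setIntegral_const, smul_eq_mul, measureReal_def, hvol] at h1 h2
  constructor
  · calc m = 1/N * m * N := by field_simp
    _ ≤ (∫ t in cellI N j, f t) * N := by nlinarith
  · calc (∫ t in cellI N j, f t) * N ≤ 1/N * M * N := by nlinarith
    _ = M := by field_simp

lemma cell_est {f : ℝ → ℝ} {m M c : ℝ} {j : ℤ}
    (hf : ∀ t ∈ cellI N j, f t ∈ Icc m M) (hc : c ∈ Icc m M)
    (hint : IntegrableOn f (cellI N j)) :
    ∫ t in cellI N j, |f t - c| ≤ (M - m) / N := by
  have hvol : (volume (cellI N j)).toReal = 1 / N := vol_cell_toReal hN j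
  have hi1 : IntegrableOn (fun t => |f t - c|) (cellI N j) :=
    (hint.sub (integrableOn_const_cell hN c j)).abs
  have h1 : ∫ t in cellI N j, |f t - c| ≤ ∫ t in cellI N j, (fun _ => M - m) t := by
    apply setIntegral_mono_on hi1
      (integrableOn_const_cell hN (M - m) j) measurableSet_Ioc
    intro t ht
    have h := hf t ht
    rw [abs_le]
    exact ⟨by linarith [h.1, hc.2], by linarith [h.2, hc.1]⟩
  calc ∫ t in cellI N j, |f t - c| ≤ ∫ t in cellI N j, (fun _ => M - m) t := h1
  _ = (M - m) / N := by rw [setIntegral_const, smul_eq_mul, measureReal_def, hvol]; ring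

lemma core {f : ℝ → ℝ}
    (hfm : ∀ t ∈ Icc (0:ℝ) 1, f t ∈ Icc (0:ℝ) 1)
    (hint : IntegrableOn f (Icc (0:ℝ) 1))
    {k : ℕ} (hk1 : 1 ≤ k) (hk2 : k ≤ N)
    (hmono1 : ∀ s t : ℝ, 0 ≤ s → s ≤ t → t ≤ ((k:ℝ)-1)/N → f s ≤ f t)
    (hmono2 : ∀ s t : ℝ, (k:ℝ)/N ≤ s → s ≤ t → t ≤ 1 → f t ≤ f s) :
    ∑ i ∈ Finset.range N, ∫ t in cellI N ((i:ℤ)+1),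
      |f t - (∫ s in cellI N ((i:ℤ)+1), f s) * N| ≤ 3 / N := by
  have hNpos : (0:ℝ) < N := Npos hN
  set g : ℕ → ℝ := fun i => f ((i:ℝ)/N) with hg
  have hsub : ∀ i, i < N → cellI N ((i:ℤ)+1) ⊆ Icc (0:ℝ) 1 := fun i hi =>
    (cell_subset hN (by omega) (by omega)).trans Ioc_subset_Icc_self
  have hinti : ∀ i, i < N → IntegrableOn f (cellI N ((i:ℤ)+1)) :=
    fun i hi => hint.mono_set (hsub i hi)
  have hpt : ∀ i : ℕ, i ≤ N → (i:ℝ)/N ∈ Icc (0:ℝ) 1 := by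
    intro i hi
    constructor
    · positivity
    · rw [div_le_one hNpos]; exact_mod_cast hi
  set h : ℕ → ℝ := fun i => ∫ t in cellI N ((i:ℤ)+1),
      |f t - (∫ s in cellI N ((i:ℤ)+1), f s) * N| with hh
  have hcast : ∀ i : ℕ, ((i+1:ℕ):ℝ) = (i:ℝ)+1 := by intro i; push_cast; ring
  have hgs : ∀ i : ℕ, g (i+1) = f (((i:ℝ)+1)/N) := by
    intro i; simp only [hg, Nat.cast_add, Nat.cast_one]
  have hlow : ∀ i, i + 1 < k → h i ≤ (g (i+1) - g i) / N := by
    intro i hik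
    have hik' : ((i:ℝ)+1) ≤ (k:ℝ) - 1 := by
      have : (i:ℝ) + 2 ≤ (k:ℝ) := by exact_mod_cast hik
      linarith
    have hbd : ∀ t ∈ cellI N ((i:ℤ)+1), f t ∈ Icc (g i) (g (i+1)) := by
      intro t ht
      rw [cell_nat hN] at ht
      have h0 : (0:ℝ) ≤ (i:ℝ)/N := by positivity
      have hub : ((i:ℝ)+1)/N ≤ ((k:ℝ)-1)/N := by gcongr
      constructor
      · exact hmono1 _ _ h0 ht.1.le (le_trans ht.2 hub)
      · rw [hgs i]
        exact hmono1 t (((i:ℝ)+1)/N) (le_trans h0 ht.1.le) ht.2 hub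
    have := cell_est hN hbd (avg_mem hN hbd (hinti i (by omega))) (hinti i (by omega))
    simpa [hh] using this
  have hhi : ∀ i, k ≤ i → i < N → h i ≤ (g i - g (i+1)) / N := by
    intro i hki hiN
    have hbd : ∀ t ∈ cellI N ((i:ℤ)+1), f t ∈ Icc (g (i+1)) (g i) := by
      intro t ht
      rw [cell_nat hN] at ht
      have hks : ((k:ℝ))/N ≤ (i:ℝ)/N := by gcongr <;> exact_mod_cast hki
      have hub : ((i:ℝ)+1)/N ≤ 1 := by
        rw [div_le_one hNpos]; exact_mod_cast hiN
      constructor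
      · rw [hgs i]
        exact hmono2 t (((i:ℝ)+1)/N) (le_trans hks ht.1.le) ht.2 hub
      · exact hmono2 ((i:ℝ)/N) t hks ht.1.le (le_trans ht.2 hub)
    have := cell_est hN hbd (avg_mem hN hbd (hinti i hiN)) (hinti i hiN)
    simpa [hh] using this
  have hmid : h (k-1) ≤ 1 / N := by
    have hbd : ∀ t ∈ cellI N ((↑(k-1):ℤ)+1), f t ∈ Icc (0:ℝ) 1 :=
      fun t ht => hfm t (hsub _ (by omega) ht)
    have := cell_est hN hbd (avg_mem hN hbd (hinti _ (by omega))) (hinti _ (by omega))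
    simpa [hh] using this.trans_eq (by norm_num)
  have e1 : ∑ i ∈ Finset.range (k-1), h i ≤ 1 / N := by
    calc ∑ i ∈ Finset.range (k-1), h i ≤ ∑ i ∈ Finset.range (k-1), (g (i+1) - g i) / N :=
      Finset.sum_le_sum (fun i hi => hlow i (by have := Finset.mem_range.mp hi; omega))
    _ = (g (k-1) - g 0) / N := by rw [← Finset.sum_div, Finset.sum_range_sub g]
    _ ≤ 1 / N := by
      have h1 : g (k-1) ≤ 1 := (hfm _ (hpt (k-1) (by omega))).2
      have h2 : 0 ≤ g 0 := (hfm _ (hpt 0 (by omega))).1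
      gcongr
      linarith
  have e2 : ∑ i ∈ Finset.Ico k N, h i ≤ 1 / N := by
    calc ∑ i ∈ Finset.Ico k N, h i ≤ ∑ i ∈ Finset.Ico k N, (g i - g (i+1)) / N :=
      Finset.sum_le_sum (fun i hi => by
        have := Finset.mem_Ico.mp hi
        exact hhi i this.1 this.2)
    _ = (g k - g N) / N := by
      rw [← Finset.sum_div, Finset.sum_Ico_eq_sub _ hk2,
        Finset.sum_range_sub' g, Finset.sum_range_sub' g]
      ring_nf
    _ ≤ 1 / N := by
      have h1 : g k ≤ 1 := (hfm _ (hpt k hk2)).2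
      have h2 : 0 ≤ g N := (hfm _ (hpt N (le_refl N))).1
      gcongr
      linarith
  have e3 : ∑ i ∈ Finset.range N, h i ≤ 3 / N := by
    rw [← Finset.sum_range_add_sum_Ico h (show k - 1 ≤ N by omega),
        Finset.sum_eq_sum_Ico_succ_bot (show k - 1 < N by omega)]
    have hkk : k - 1 + 1 = k := by omega
    rw [hkk]
    have h3 : (3:ℝ)/N = 1/N + 1/N + 1/N := by ring
    linarith
  exact e3

end Est

section Main

lemma integrableOn_of_bound {g : ℝ → ℝ} {s : Set ℝ} {C : ℝ} (hs : MeasurableSet s)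
    (hfin : volume s ≠ ⊤) (hm : Measurable g) (hb : ∀ t ∈ s, |g t| ≤ C) :
    IntegrableOn g s := by
  apply Measure.integrableOn_of_bounded hfin hm.aestronglyMeasurable
  rw [ae_restrict_iff' hs]
  exact ae_of_all _ (fun t ht => by rw [Real.norm_eq_abs]; exact hb t ht)

variable {u : ℝ → ℝ → ℝ} (hu : IsGraphon u) {N : ℕ} (hN : 1 ≤ N)
include hu hN

lemma vol_cell_ne_top (j : ℤ) : volume (cellI N j) ≠ ⊤ := by
  rw [vol_cell hN j]; exact ENNReal.ofReal_ne_top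

lemma int_ux {x : ℝ} (hx : x ∈ Icc (0:ℝ) 1) {s : Set ℝ} (hs : MeasurableSet s)
    (hsub : s ⊆ Icc (0:ℝ) 1) (hfin : volume s ≠ ⊤) : IntegrableOn (u x) s :=
  integrableOn_of_bound hs hfin hu.1.of_uncurry_left
    (fun t ht => abs_le.mpr ⟨by linarith [(hu.2.2 x t hx (hsub ht)).1],
      (hu.2.2 x t hx (hsub ht)).2⟩)

lemma G_measurable (j : ℤ) :
    Measurable (fun x => (∫ y in cellI N j, u x y) * N) := by
  have : StronglyMeasurable (fun x => ∫ y in cellI N j, u x y) :=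
    hu.1.stronglyMeasurable.integral_prod_right'
  exact this.measurable.mul_const _

lemma G_mem {j : ℤ} (hj1 : 1 ≤ j) (hj2 : j ≤ N) {x : ℝ} (hx : x ∈ Icc (0:ℝ) 1) :
    (∫ y in cellI N j, u x y) * N ∈ Icc (0:ℝ) 1 := by
  apply avg_mem hN
  · exact fun t ht => hu.2.2 x t hx (Ioc_subset_Icc_self (cell_subset hN hj1 hj2 ht))
  · exact int_ux hu hN hx measurableSet_Ioc
      ((cell_subset hN hj1 hj2).trans Ioc_subset_Icc_self) (vol_cell_ne_top hu hN j)

lemma int_G {j : ℤ} (hj1 : 1 ≤ j) (hj2 : j ≤ N) {s : Set ℝ} (hs : MeasurableSet s)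
    (hsub : s ⊆ Icc (0:ℝ) 1) (hfin : volume s ≠ ⊤) :
    IntegrableOn (fun x => (∫ y in cellI N j, u x y) * N) s :=
  integrableOn_of_bound hs hfin (G_measurable hu hN j)
    (fun t ht => abs_le.mpr ⟨by linarith [(G_mem hu hN hj1 hj2 (hsub ht)).1],
      (G_mem hu hN hj1 hj2 (hsub ht)).2⟩)

lemma stepVal_eq {i j : ℤ} (hi1 : 1 ≤ i) (hi2 : i ≤ N) :
    stepVal u N i j = (∫ x in cellI N i, (∫ y in cellI N j, u x y) * N) * N := by
  have hNpos : (0:ℝ) < N := Npos hN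
  rw [stepVal, avgOn, vol_cell_toReal hN, vol_cell_toReal hN, integral_mul_const]
  field_simp

lemma stepVal_mem {i j : ℤ} (hi1 : 1 ≤ i) (hi2 : i ≤ N) (hj1 : 1 ≤ j) (hj2 : j ≤ N) :
    stepVal u N i j ∈ Icc (0:ℝ) 1 := by
  rw [stepVal_eq hu hN hi1 hi2]
  apply avg_mem hN
  · exact fun t ht => G_mem hu hN hj1 hj2
      (Ioc_subset_Icc_self (cell_subset hN hi1 hi2 ht))
  · exact int_G hu hN hj1 hj2 measurableSet_Ioc
      ((cell_subset hN hi1 hi2).trans Ioc_subset_Icc_self) (vol_cell_ne_top hu hN i)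


variable (hrob : IsRobinson u)
include hrob

lemma coreA {x : ℝ} (hx : x ∈ Ioc (0:ℝ) 1) :
    ∑ i ∈ Finset.range N, ∫ y in cellI N ((i:ℤ)+1),
      |u x y - (∫ s in cellI N ((i:ℤ)+1), u x s) * N| ≤ 3 / N := by
  have hNpos : (0:ℝ) < N := Npos hN
  have hxI : x ∈ Icc (0:ℝ) 1 := Ioc_subset_Icc_self hx
  obtain ⟨hk1, hk2⟩ := cellOf_mem hN hx
  have hxcell : x ∈ cellI N (cellOf N x) := (mem_cell_iff hN).mpr rfl
  set k : ℕ := (cellOf N x).toNat with hk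
  have hkc : ((k:ℕ):ℝ) = ((cellOf N x : ℤ):ℝ) := by
    rw [hk]; exact_mod_cast congrArg (fun z : ℤ => (z:ℝ)) (Int.toNat_of_nonneg (by omega))
  have hx1 : (((cellOf N x : ℤ):ℝ) - 1)/N < x := hxcell.1
  have hx2 : x ≤ ((cellOf N x : ℤ):ℝ)/N := hxcell.2
  apply core hN (fun t ht => hu.2.2 x t hxI ht)
    (int_ux hu hN hxI measurableSet_Icc subset_rfl
      (by rw [Real.volume_Icc]; exact ENNReal.ofReal_ne_top))
    (k := k) (by omega) (by omega)
  · intro s t h0 hst ht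
    rw [hkc] at ht
    have htx : t ≤ x := le_of_lt (lt_of_le_of_lt ht hx1)
    have := hrob s t x h0 hst htx hxI.2
    rw [hu.2.1 x s, hu.2.1 x t]
    exact this.trans (min_le_right _ _)
  · intro s t hs hst ht
    rw [hkc] at hs
    have hxs : x ≤ s := le_trans hx2 hs
    have := hrob x s t hx.1.le hxs hst ht
    exact this.trans (min_le_left _ _)

lemma coreB {j : ℕ} (hj : j < N) :
    ∑ i ∈ Finset.range N, ∫ x in cellI N ((i:ℤ)+1),
      |(∫ y in cellI N ((j:ℤ)+1), u x y) * N -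
        (∫ s in cellI N ((i:ℤ)+1), (∫ y in cellI N ((j:ℤ)+1), u s y) * N) * N| ≤ 3 / N := by
  have hNpos : (0:ℝ) < N := Npos hN
  have hcell : cellI N ((j:ℤ)+1) = Ioc ((j:ℝ)/N) (((j:ℝ)+1)/N) := cell_nat hN j
  have hjN : ((j:ℝ)+1)/N ≤ 1 := by
    rw [div_le_one hNpos]; exact_mod_cast hj
  have hj0 : (0:ℝ) ≤ (j:ℝ)/N := by positivity
  have hj0' : (0:ℝ) ≤ ((j:ℝ)+1)/N := by positivity
  have hj1 : (j:ℝ)/N ≤ 1 := le_trans (by gcongr <;> linarith) hjN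
  have hintu : ∀ z ∈ Icc (0:ℝ) 1, IntegrableOn (u z) (cellI N ((j:ℤ)+1)) := fun z hz =>
    int_ux hu hN hz measurableSet_Ioc
      ((cell_subset hN (by omega) (by omega)).trans Ioc_subset_Icc_self)
      (vol_cell_ne_top hu hN _)
  apply core hN (fun t ht => G_mem hu hN (by omega) (by omega) ht)
    (int_G hu hN (by omega) (by omega) measurableSet_Icc subset_rfl
      (by rw [Real.volume_Icc]; exact ENNReal.ofReal_ne_top))
    (k := j+1) (by omega) (by omega)
  · intro s t h0 hst ht
    have ht' : t ≤ (j:ℝ)/N := by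
      have : ((j+1:ℕ):ℝ) - 1 = (j:ℝ) := by push_cast; ring
      rwa [this] at ht
    apply mul_le_mul_of_nonneg_right _ hNpos.le
    apply setIntegral_mono_on (hintu s ⟨h0, by linarith [le_trans hst ht']⟩)
      (hintu t ⟨le_trans h0 hst, by linarith⟩) measurableSet_Ioc
    intro y hy
    rw [hcell] at hy
    have hty : t ≤ y := le_trans ht' hy.1.le
    have hy1 : y ≤ 1 := le_trans hy.2 hjN
    exact (hrob s t y h0 hst hty hy1).trans (min_le_right _ _)
  · intro s t hs hst ht
    have hs' : ((j:ℝ)+1)/N ≤ s := by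
      have : ((j+1:ℕ):ℝ) = (j:ℝ) + 1 := by push_cast; ring
      rwa [this] at hs
    apply mul_le_mul_of_nonneg_right _ hNpos.le
    apply setIntegral_mono_on (hintu t ⟨le_trans hj0' (le_trans hs' hst), ht⟩)
      (hintu s ⟨le_trans hj0' hs', le_trans hst ht⟩) measurableSet_Ioc
    intro y hy
    rw [hcell] at hy
    have h0y : 0 ≤ y := le_trans hj0 hy.1.le
    have hys : y ≤ s := le_trans hy.2 hs'
    have := hrob y s t h0y hys hst ht
    rw [hu.2.1 s y, hu.2.1 t y]
    exact this.trans (min_le_left _ _)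

end Main


/-- For a Robinson graphon `u`, the step approximation satisfies `‖u − u^{(N)}‖₁ ≤ 7/N`. -/
theorem robinson_stepping (u : ℝ → ℝ → ℝ) (hu : IsGraphon u) (hrob : IsRobinson u)
    (N : ℕ) (hN : 1 ≤ N) :
    (∫ x in Icc (0:ℝ) 1, ∫ y in Icc (0:ℝ) 1, |u x y - stepG u N x y|) ≤ 7 / N := by
  have hNpos : (0:ℝ) < N := Npos hN
  have hvolIoc : volume (Ioc (0:ℝ) 1) = 1 := by simp
  have hIccfin : volume (Icc (0:ℝ) 1) ≠ ⊤ := by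
    rw [Real.volume_Icc]; exact ENNReal.ofReal_ne_top
  have hIocfin : volume (Ioc (0:ℝ) 1) ≠ ⊤ := by rw [hvolIoc]; exact ENNReal.one_ne_top
  have hcellOfm : Measurable (cellOf N) := Int.measurable_ceil.comp (measurable_const_mul _)
  rw [integral_Icc_eq_integral_Ioc]
  have hinrw : ∀ x : ℝ, (∫ y in Icc (0:ℝ) 1, |u x y - stepG u N x y|)
      = ∫ y in Ioc (0:ℝ) 1, |u x y - stepG u N x y| := fun _ => integral_Icc_eq_integral_Ioc
  simp_rw [hinrw]
  set R : ℝ → ℝ := fun x => 3 / N + ∑ i ∈ Finset.range N,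
      (1/N) * |(∫ y in cellI N ((i:ℤ)+1), u x y) * N -
        stepVal u N (cellOf N x) ((i:ℤ)+1)| with hR
  have hRterm : ∀ i, i < N → IntegrableOn
      (fun x => |(∫ y in cellI N ((i:ℤ)+1), u x y) * N -
        stepVal u N (cellOf N x) ((i:ℤ)+1)|) (Ioc (0:ℝ) 1) := by
    intro i hi
    apply integrableOn_of_bound (C := 2) measurableSet_Ioc hIocfin
    · have h2 : Measurable (fun x => stepVal u N (cellOf N x) ((i:ℤ)+1)) :=
        (measurable_from_top (f := fun z : ℤ => stepVal u N z ((i:ℤ)+1))).comp hcellOfm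
      exact ((G_measurable hu hN _).sub h2).abs
    · intro t ht
      rw [abs_abs]
      obtain ⟨h1, h2⟩ := cellOf_mem hN ht
      have hG := G_mem hu hN (j := (i:ℤ)+1) (by omega) (by omega) (Ioc_subset_Icc_self ht)
      have hs := stepVal_mem hu hN h1 h2 (j := (i:ℤ)+1) (by omega) (by omega)
      exact abs_le.mpr ⟨by linarith [hG.1, hs.2], by linarith [hG.2, hs.1]⟩
  have hconst_int : IntegrableOn (fun _ : ℝ => (3:ℝ)/N) (Ioc (0:ℝ) 1) :=
    integrableOn_const (by rw [hvolIoc]; exact ENNReal.one_ne_top)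
  have hRint : IntegrableOn R (Ioc (0:ℝ) 1) := by
    apply Integrable.add hconst_int
    apply integrable_finset_sum
    intro i hi
    exact (hRterm i (Finset.mem_range.mp hi)).const_mul _
  have inner_le : ∀ x ∈ Ioc (0:ℝ) 1,
      (∫ y in Ioc (0:ℝ) 1, |u x y - stepG u N x y|) ≤ R x := by
    intro x hx
    have hxI : x ∈ Icc (0:ℝ) 1 := Ioc_subset_Icc_self hx
    obtain ⟨hk1, hk2⟩ := cellOf_mem hN hx
    have hinty : IntegrableOn (fun y => |u x y - stepG u N x y|) (Ioc (0:ℝ) 1) := by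
      apply integrableOn_of_bound (C := 2) measurableSet_Ioc hIocfin
      · have h2 : Measurable (fun y => stepG u N x y) :=
          (measurable_from_top (f := fun z : ℤ => stepVal u N (cellOf N x) z)).comp hcellOfm
        exact ((hu.1.of_uncurry_left).sub h2).abs
      · intro t ht
        rw [abs_abs]
        obtain ⟨h1, h2⟩ := cellOf_mem hN ht
        have hu1 := hu.2.2 x t hxI (Ioc_subset_Icc_self ht)
        have hs := stepVal_mem hu hN hk1 hk2 h1 h2
        simp only [stepG]
        exact abs_le.mpr ⟨by linarith [hu1.1, hs.2], by linarith [hu1.2, hs.1]⟩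
    rw [integral_Ioc_eq_sum hN _ hinty]
    have percell : ∀ i ∈ Finset.range N,
        (∫ y in cellI N ((i:ℤ)+1), |u x y - stepG u N x y|)
        ≤ (∫ y in cellI N ((i:ℤ)+1), |u x y - (∫ s in cellI N ((i:ℤ)+1), u x s) * N|)
          + (1/N) * |(∫ s in cellI N ((i:ℤ)+1), u x s) * N -
              stepVal u N (cellOf N x) ((i:ℤ)+1)| := by
      intro i hi
      have hiN := Finset.mem_range.mp hi
      have hsub : cellI N ((i:ℤ)+1) ⊆ Ioc (0:ℝ) 1 := cell_subset hN (by omega) (by omega)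
      have hIcc : cellI N ((i:ℤ)+1) ⊆ Icc (0:ℝ) 1 := hsub.trans Ioc_subset_Icc_self
      have hrw : (∫ y in cellI N ((i:ℤ)+1), |u x y - stepG u N x y|)
          = ∫ y in cellI N ((i:ℤ)+1), |u x y - stepVal u N (cellOf N x) ((i:ℤ)+1)| := by
        apply setIntegral_congr_fun measurableSet_Ioc
        intro y hy
        simp only [stepG]
        rw [(mem_cell_iff hN).mp hy]
      rw [hrw]
      set c := (∫ s in cellI N ((i:ℤ)+1), u x s) * N with hc
      set d := stepVal u N (cellOf N x) ((i:ℤ)+1) with hd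
      have hintu : IntegrableOn (u x) (cellI N ((i:ℤ)+1)) :=
        int_ux hu hN hxI measurableSet_Ioc hIcc (vol_cell_ne_top hu hN _)
      have hint1 : IntegrableOn (fun y => |u x y - c|) (cellI N ((i:ℤ)+1)) :=
        (hintu.sub (integrableOn_const_cell hN c _)).abs
      have hint0 : IntegrableOn (fun y => |u x y - d|) (cellI N ((i:ℤ)+1)) :=
        (hintu.sub (integrableOn_const_cell hN d _)).abs
      have hint2 : IntegrableOn (fun y => |u x y - c| + |c - d|) (cellI N ((i:ℤ)+1)) :=
        hint1.add (integrableOn_const_cell hN _ _)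
      calc (∫ y in cellI N ((i:ℤ)+1), |u x y - d|)
          ≤ ∫ y in cellI N ((i:ℤ)+1), (|u x y - c| + |c - d|) := by
            apply setIntegral_mono_on hint0 hint2 measurableSet_Ioc
            intro y hy
            calc |u x y - d| = |(u x y - c) + (c - d)| := by ring_nf
            _ ≤ |u x y - c| + |c - d| := abs_add_le _ _
        _ = (∫ y in cellI N ((i:ℤ)+1), |u x y - c|) + (1/N) * |c - d| := by
            rw [integral_add hint1 (integrableOn_const_cell hN _ _), setIntegral_const,
              smul_eq_mul, measureReal_def, vol_cell_toReal hN]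
    calc ∑ i ∈ Finset.range N, (∫ y in cellI N ((i:ℤ)+1), |u x y - stepG u N x y|)
        ≤ ∑ i ∈ Finset.range N,
          ((∫ y in cellI N ((i:ℤ)+1), |u x y - (∫ s in cellI N ((i:ℤ)+1), u x s) * N|)
          + (1/N) * |(∫ s in cellI N ((i:ℤ)+1), u x s) * N -
              stepVal u N (cellOf N x) ((i:ℤ)+1)|) := Finset.sum_le_sum percell
      _ = (∑ i ∈ Finset.range N,
            ∫ y in cellI N ((i:ℤ)+1), |u x y - (∫ s in cellI N ((i:ℤ)+1), u x s) * N|)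
          + ∑ i ∈ Finset.range N, (1/N) * |(∫ y in cellI N ((i:ℤ)+1), u x y) * N -
              stepVal u N (cellOf N x) ((i:ℤ)+1)| := Finset.sum_add_distrib
      _ ≤ R x := by
        rw [hR]
        have := coreA hu hN hrob hx
        linarith
  calc (∫ x in Ioc (0:ℝ) 1, ∫ y in Ioc (0:ℝ) 1, |u x y - stepG u N x y|)
      ≤ ∫ x in Ioc (0:ℝ) 1, R x := by
        apply integral_mono_of_nonneg
        · exact Filter.Eventually.of_forall (fun x => integral_nonneg (fun y => abs_nonneg _))
        · exact hRint
        · rw [Filter.EventuallyLE, ae_restrict_iff' measurableSet_Ioc]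
          exact Filter.Eventually.of_forall inner_le
    _ = 3/N + ∑ i ∈ Finset.range N, (1/N) * ∫ x in Ioc (0:ℝ) 1,
          |(∫ y in cellI N ((i:ℤ)+1), u x y) * N -
            stepVal u N (cellOf N x) ((i:ℤ)+1)| := by
        rw [hR, integral_add hconst_int (integrable_finset_sum _
          (fun i hi => (hRterm i (Finset.mem_range.mp hi)).const_mul _)),
          integral_finset_sum _ (fun i hi => (hRterm i (Finset.mem_range.mp hi)).const_mul _)]
        congr 1
        · rw [setIntegral_const, measureReal_def, hvolIoc]; simp
        · exact Finset.sum_congr rfl (fun i hi => integral_const_mul _ _)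
    _ ≤ 3/N + ∑ _i ∈ Finset.range N, (1/(N:ℝ)) * (3/N) := by
        apply add_le_add le_rfl
        apply Finset.sum_le_sum
        intro i hi
        have hiN := Finset.mem_range.mp hi
        apply mul_le_mul_of_nonneg_left _ (by positivity)
        rw [integral_Ioc_eq_sum hN _ (hRterm i hiN)]
        have hcong : ∀ i' ∈ Finset.range N,
            (∫ x in cellI N ((i':ℤ)+1), |(∫ y in cellI N ((i:ℤ)+1), u x y) * N -
              stepVal u N (cellOf N x) ((i:ℤ)+1)|)
            = ∫ x in cellI N ((i':ℤ)+1), |(∫ y in cellI N ((i:ℤ)+1), u x y) * N -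
              (∫ s in cellI N ((i':ℤ)+1), (∫ y in cellI N ((i:ℤ)+1), u s y) * N) * N| := by
          intro i' hi'
          have hi'N := Finset.mem_range.mp hi'
          apply setIntegral_congr_fun measurableSet_Ioc
          intro x hx
          beta_reduce
          rw [(mem_cell_iff hN).mp hx, stepVal_eq hu hN (by omega) (by omega)]
        rw [Finset.sum_congr rfl hcong]
        exact coreB hu hN hrob hiN
    _ = 3/N + 3/N := by
        have hs : ∑ _i ∈ Finset.range N, (1/(N:ℝ)) * (3/N) = 3/N := by
          rw [Finset.sum_const, Finset.card_range, nsmul_eq_mul]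
          field_simp
        rw [hs]
    _ ≤ 7/N := by
        rw [← add_div]
        gcongr
        norm_num
end

section
/- Let X be a real random variable with mean zero such that for some σ > 0 and all s > 0, ℙ(X ≥ s) ≤ exp(−s²/(2σ²)) and ℙ(X ≤ −s) ≤ exp(−s²/(2σ²)). Then the random variable Z = X² − 𝔼[X²] is sub-exponential with parameters (8√2·σ², 8σ²); that is, 𝔼[exp(λZ)] ≤ exp( (8√2·σ²)²·λ²/2 ) = exp(64σ⁴λ²) for every λ with |λ| ≤ 1/(8σ²). Moreover, for every integer k ≥ 1, 𝔼[X^{2k}] ≤ 2^{k+1}·σ^{2k}·k!. -/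
open MeasureTheory Real Set
set_option maxHeartbeats 1000000

section aux
variable {Ω : Type*} [MeasurableSpace Ω] {μ : Measure Ω} [IsProbabilityMeasure μ]
variable {X : Ω → ℝ} {σ : ℝ}

lemma aux_tail (hσ : 0 < σ)
    (hup : ∀ s : ℝ, 0 < s → (μ {ω | s ≤ X ω}).toReal ≤ Real.exp (-s ^ 2 / (2 * σ ^ 2)))
    (hdown : ∀ s : ℝ, 0 < s → (μ {ω | X ω ≤ -s}).toReal ≤ Real.exp (-s ^ 2 / (2 * σ ^ 2)))
    {t : ℝ} (ht : 0 < t) :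
    μ {ω | t ≤ |X ω|} ≤ ENNReal.ofReal (2 * Real.exp (-t ^ 2 / (2 * σ ^ 2))) := by
  have hsub : {ω | t ≤ |X ω|} ⊆ {ω | t ≤ X ω} ∪ {ω | X ω ≤ -t} := by
    intro ω hω
    rcases le_abs.mp (mem_setOf.mp hω) with h | h
    · exact Or.inl h
    · exact Or.inr (by simpa using neg_le_neg h)
  calc μ {ω | t ≤ |X ω|} ≤ μ {ω | t ≤ X ω} + μ {ω | X ω ≤ -t} :=
        (measure_mono hsub).trans (measure_union_le _ _)
    _ ≤ ENNReal.ofReal (Real.exp (-t ^ 2 / (2 * σ ^ 2)))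
        + ENNReal.ofReal (Real.exp (-t ^ 2 / (2 * σ ^ 2))) := by
        gcongr
        · exact ENNReal.le_ofReal_iff_toReal_le (measure_ne_top μ _) (Real.exp_pos _).le
            |>.mpr (hup t ht)
        · exact ENNReal.le_ofReal_iff_toReal_le (measure_ne_top μ _) (Real.exp_pos _).le
            |>.mpr (hdown t ht)
    _ = ENNReal.ofReal (2 * Real.exp (-t ^ 2 / (2 * σ ^ 2))) := by
        rw [← ENNReal.ofReal_add (Real.exp_pos _).le (Real.exp_pos _).le]
        congr 1; ring


lemma aux_int (hσ : 0 < σ) {k : ℕ} (hk : 1 ≤ k) :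
    IntegrableOn
      (fun t : ℝ => 2 * Real.exp (-t ^ 2 / (2 * σ ^ 2)) * ((2 * k) * t ^ (2 * k - 1)))
      (Ioi 0) volume ∧
    ∫ t in Ioi 0, 2 * Real.exp (-t ^ 2 / (2 * σ ^ 2)) * ((2 * k) * t ^ (2 * k - 1)) =
      2 ^ (k + 1) * σ ^ (2 * k) * (Nat.factorial k) := by
  have hb : (0:ℝ) < (2 * σ ^ 2)⁻¹ := by positivity
  set b : ℝ := (2 * σ ^ 2)⁻¹ with hbdef
  have hcast : ((2 * k - 1 : ℕ) : ℝ) = 2 * (k:ℝ) - 1 := by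
    have : (1:ℕ) ≤ 2 * k := le_trans hk (by omega)
    push_cast [this]; ring
  have hs : (-1:ℝ) < ((2 * k - 1 : ℕ) : ℝ) := by
    rw [hcast]
    have : (1:ℝ) ≤ (k:ℝ) := by exact_mod_cast hk
    linarith
  have hI : IntegrableOn (fun x : ℝ => x ^ (((2 * k - 1 : ℕ) : ℝ)) * Real.exp (-b * x ^ 2))
      (Ioi 0) volume := integrableOn_rpow_mul_exp_neg_mul_sq hb hs
  have hcongr : ∀ x ∈ Ioi (0:ℝ),
      2 * Real.exp (-x ^ 2 / (2 * σ ^ 2)) * ((2 * k) * x ^ (2 * k - 1)) =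
      (4 * k) * (x ^ (((2 * k - 1 : ℕ) : ℝ)) * Real.exp (-b * x ^ 2)) := by
    intro x hx
    rw [Real.rpow_natCast]
    have : -x ^ 2 / (2 * σ ^ 2) = -b * x ^ 2 := by
      rw [hbdef]; field_simp
    rw [this]; ring
  constructor
  · exact (IntegrableOn.congr_fun ((hI.const_mul (4 * k))) (fun x hx => (hcongr x hx).symm)
      measurableSet_Ioi)
  · rw [setIntegral_congr_fun measurableSet_Ioi hcongr, integral_const_mul]
    have key := integral_rpow_mul_exp_neg_mul_rpow (p := 2) (q := ((2 * k - 1 : ℕ) : ℝ))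
      (b := b) two_pos hs hb
    have hrw : ∀ x ∈ Ioi (0:ℝ),
        x ^ (((2 * k - 1 : ℕ) : ℝ)) * Real.exp (-b * x ^ (2:ℝ)) =
        x ^ (((2 * k - 1 : ℕ) : ℝ)) * Real.exp (-b * x ^ 2) := by
      intro x hx
      rw [show x ^ (2:ℝ) = x ^ (2:ℕ) by
        rw [← Real.rpow_natCast x 2]; norm_num]
    rw [setIntegral_congr_fun measurableSet_Ioi hrw] at key
    rw [key]
    have hq1 : (((2 * k - 1 : ℕ) : ℝ) + 1) / 2 = (k : ℝ) := by rw [hcast]; ring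
    rw [hq1]
    have hΓ : Real.Gamma (k : ℝ) = ((k-1).factorial : ℝ) := by
      have := Real.Gamma_nat_eq_factorial (k - 1)
      rwa [show (((k-1:ℕ):ℝ) + 1) = (k:ℝ) by
        have : (1:ℕ) ≤ k := hk
        push_cast [this]; ring] at this
    rw [hΓ]
    have hbpow : b ^ (-(k:ℝ)) = (2 * σ ^ 2) ^ k := by
      rw [Real.rpow_neg hb.le, Real.rpow_natCast, hbdef, ← inv_pow, inv_inv]
    have hq2 : -(((2 * k - 1 : ℕ) : ℝ) + 1) / 2 = -(k:ℝ) := by rw [hcast]; ring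
    rw [hq2, hbpow]
    have hfac : (k:ℝ) * ((k-1).factorial : ℝ) = (k.factorial : ℝ) := by
      rw [← Nat.cast_mul]
      congr 1
      have := Nat.succ_pred_eq_of_pos (lt_of_lt_of_le zero_lt_one hk)
      calc k * (k-1).factorial = (k - 1 + 1) * (k-1).factorial := by rw [Nat.sub_add_cancel hk]
        _ = (k - 1 + 1).factorial := (Nat.factorial_succ _).symm
        _ = k.factorial := by rw [Nat.sub_add_cancel hk]
    have : (2 * σ ^ 2) ^ k = 2 ^ k * σ ^ (2 * k) := by
      rw [mul_pow, pow_mul]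
    rw [this]
    rw [pow_succ]
    nlinarith [hfac, pow_pos (by positivity : (0:ℝ) < 2 * σ^2) k]

lemma aux_moment (hX : Measurable X) (hσ : 0 < σ)
    (hup : ∀ s : ℝ, 0 < s → (μ {ω | s ≤ X ω}).toReal ≤ Real.exp (-s ^ 2 / (2 * σ ^ 2)))
    (hdown : ∀ s : ℝ, 0 < s → (μ {ω | X ω ≤ -s}).toReal ≤ Real.exp (-s ^ 2 / (2 * σ ^ 2)))
    {k : ℕ} (hk : 1 ≤ k) :
    ∫⁻ ω, ENNReal.ofReal (|X ω| ^ (2 * k)) ∂μ ≤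
      ENNReal.ofReal (2 ^ (k + 1) * σ ^ (2 * k) * (Nat.factorial k)) := by
  set g : ℝ → ℝ := fun t => (2 * k : ℝ) * t ^ (2 * k - 1) with hg
  have hgc : Continuous g := by continuity
  have layer := lintegral_comp_eq_lintegral_meas_le_mul (f := fun ω => |X ω|) (g := g) μ
    (Filter.Eventually.of_forall (fun ω => abs_nonneg _))
    (hX.abs).aemeasurable
    (fun t _ => hgc.intervalIntegrable 0 t)
    (by
      rw [ae_restrict_iff' measurableSet_Ioi]
      apply Filter.Eventually.of_forall
      intro t ht
      have ht0 : (0:ℝ) < t := ht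
      positivity)
  have hGval : ∀ y : ℝ, 0 ≤ y → (∫ t in (0:ℝ)..y, g t) = y ^ (2 * k) := by
    intro y hy
    rw [hg]
    simp only []
    rw [intervalIntegral.integral_const_mul, integral_pow]
    have h1 : 2 * k - 1 + 1 = 2 * k := by omega
    rw [h1]
    have : ((2 * k - 1 : ℕ) : ℝ) + 1 = (2 * k : ℝ) := by
      have : (1:ℕ) ≤ 2 * k := by omega
      push_cast [this]; ring
    rw [this]
    have hne : (2 * (k:ℝ)) ≠ 0 := by
      have : (1:ℝ) ≤ (k:ℝ) := by exact_mod_cast hk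
      positivity
    field_simp
    rw [zero_pow (by omega), sub_zero]
  have hL : ∫⁻ ω, ENNReal.ofReal (|X ω| ^ (2 * k)) ∂μ =
      ∫⁻ t in Ioi 0, μ {ω | t ≤ |X ω|} * ENNReal.ofReal (g t) := by
    rw [← layer]
    apply lintegral_congr
    intro ω
    rw [hGval _ (abs_nonneg _)]
  rw [hL]
  have hbound : ∫⁻ t in Ioi 0, μ {ω | t ≤ |X ω|} * ENNReal.ofReal (g t) ≤
      ∫⁻ t in Ioi 0,
        ENNReal.ofReal (2 * Real.exp (-t ^ 2 / (2 * σ ^ 2)) * g t) := by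
    apply lintegral_mono_ae
    rw [ae_restrict_iff' measurableSet_Ioi]
    apply Filter.Eventually.of_forall
    intro t ht
    exact le_trans (mul_le_mul_left (aux_tail hσ hup hdown ht) _)
      (le_of_eq (ENNReal.ofReal_mul (by positivity)).symm)
  refine hbound.trans ?_
  have hint := aux_int hσ hk
  rw [← ofReal_integral_eq_lintegral_ofReal hint.1 ?nn]
  case nn =>
    filter_upwards [self_mem_ae_restrict measurableSet_Ioi] with t ht
    have ht0 : (0:ℝ) < t := ht
    positivity
  exact le_of_eq (congrArg _ hint.2)

lemma aux_moment' (hX : Measurable X) (hσ : 0 < σ)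
    (hup : ∀ s : ℝ, 0 < s → (μ {ω | s ≤ X ω}).toReal ≤ Real.exp (-s ^ 2 / (2 * σ ^ 2)))
    (hdown : ∀ s : ℝ, 0 < s → (μ {ω | X ω ≤ -s}).toReal ≤ Real.exp (-s ^ 2 / (2 * σ ^ 2)))
    {k : ℕ} (hk : 1 ≤ k) :
    Integrable (fun ω => X ω ^ (2 * k)) μ ∧
      ∫ ω, X ω ^ (2 * k) ∂μ ≤ 2 ^ (k + 1) * σ ^ (2 * k) * (Nat.factorial k) := by
  have habs : ∀ ω, X ω ^ (2 * k) = |X ω| ^ (2 * k) := fun ω =>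
    ((even_two_mul k).pow_abs _).symm
  have hnn : ∀ ω, (0:ℝ) ≤ X ω ^ (2 * k) := fun ω => (even_two_mul k).pow_nonneg _
  have hmble : Measurable (fun ω => X ω ^ (2 * k)) := hX.pow_const _
  have hlint := aux_moment hX hσ hup hdown hk
  have hlint' : ∫⁻ ω, ENNReal.ofReal (X ω ^ (2 * k)) ∂μ ≤
      ENNReal.ofReal (2 ^ (k + 1) * σ ^ (2 * k) * (Nat.factorial k)) := by
    refine le_trans (le_of_eq (lintegral_congr fun ω => by rw [habs ω])) hlint
  have hInt : Integrable (fun ω => X ω ^ (2 * k)) μ := by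
    refine ⟨hmble.aestronglyMeasurable, ?_⟩
    rw [hasFiniteIntegral_iff_ofReal (Filter.Eventually.of_forall hnn)]
    exact lt_of_le_of_lt hlint' ENNReal.ofReal_lt_top
  refine ⟨hInt, ?_⟩
  rw [integral_eq_lintegral_of_nonneg_ae (Filter.Eventually.of_forall hnn)
    hmble.aestronglyMeasurable]
  exact ENNReal.toReal_le_of_le_ofReal (by positivity) hlint'

lemma aux_expLin (hX : Measurable X) (hσ : 0 < σ)
    (hup : ∀ s : ℝ, 0 < s → (μ {ω | s ≤ X ω}).toReal ≤ Real.exp (-s ^ 2 / (2 * σ ^ 2)))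
    (hdown : ∀ s : ℝ, 0 < s → (μ {ω | X ω ≤ -s}).toReal ≤ Real.exp (-s ^ 2 / (2 * σ ^ 2)))
    {c : ℝ} (hc0 : 0 ≤ c) (hc : c ≤ 1 / (8 * σ ^ 2)) :
    ∫⁻ ω, ENNReal.ofReal (Real.exp (c * X ω ^ 2)) ∂μ ≤
      ENNReal.ofReal (1 + c * (∫ ω, X ω ^ (2 * 1) ∂μ) + 32 / 3 * c ^ 2 * σ ^ 4) := by
  have hm2 := aux_moment' hX hσ hup hdown (k := 1) le_rfl
  set m : ℝ := ∫ ω, X ω ^ (2 * 1) ∂μ with hmdef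
  have hm_nn : 0 ≤ m := integral_nonneg fun ω => (even_two_mul 1).pow_nonneg _
  -- pointwise series expansion
  have hexp : ∀ u : ℝ, Real.exp u = ∑' n : ℕ, u ^ n / n.factorial := by
    intro u
    rw [Real.exp_eq_exp_ℝ, NormedSpace.exp_eq_tsum_div]
  have hpt : ∀ ω, ENNReal.ofReal (Real.exp (c * X ω ^ 2)) =
      ∑' k : ℕ, ENNReal.ofReal (c ^ k / k.factorial * X ω ^ (2 * k)) := by
    intro ω
    rw [hexp]
    rw [ENNReal.ofReal_tsum_of_nonneg]
    · congr 1; funext k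
      congr 1
      rw [mul_pow, pow_mul]
      ring
    · intro n
      positivity
    · exact Real.summable_pow_div_factorial _
  calc ∫⁻ ω, ENNReal.ofReal (Real.exp (c * X ω ^ 2)) ∂μ
      = ∑' k : ℕ, ∫⁻ ω, ENNReal.ofReal (c ^ k / k.factorial * X ω ^ (2 * k)) ∂μ := by
        rw [← lintegral_tsum]
        · exact lintegral_congr fun ω => hpt ω
        · intro k
          exact ((hX.pow_const _).const_mul _).ennreal_ofReal.aemeasurable
    _ = ∑' k : ℕ, ENNReal.ofReal (c ^ k / k.factorial) *
          ∫⁻ ω, ENNReal.ofReal (X ω ^ (2 * k)) ∂μ := by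
        congr 1; funext k
        rw [← lintegral_const_mul' _ _ ENNReal.ofReal_ne_top]
        exact lintegral_congr fun ω => by
          rw [← ENNReal.ofReal_mul (by positivity)]
    _ ≤ ENNReal.ofReal 1 + ENNReal.ofReal (c * m) + ENNReal.ofReal (32/3 * c^2 * σ^4) := by
        rw [tsum_eq_zero_add' ENNReal.summable, tsum_eq_zero_add' ENNReal.summable]
        have h0 : ENNReal.ofReal (c ^ 0 / Nat.factorial 0) *
            ∫⁻ ω, ENNReal.ofReal (X ω ^ (2 * 0)) ∂μ = ENNReal.ofReal 1 := by
          simp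
        have h1 : ENNReal.ofReal (c ^ (0+1) / Nat.factorial (0+1)) *
            ∫⁻ ω, ENNReal.ofReal (X ω ^ (2 * (0+1))) ∂μ = ENNReal.ofReal (c * m) := by
          have heq : ∫⁻ ω, ENNReal.ofReal (X ω ^ (2 * (0+1))) ∂μ = ENNReal.ofReal m := by
            rw [hmdef, ofReal_integral_eq_lintegral_ofReal hm2.1
              (Filter.Eventually.of_forall fun ω => (even_two_mul 1).pow_nonneg _)]
          rw [heq, ← ENNReal.ofReal_mul (by positivity)]
          norm_num [Nat.factorial]
        rw [h0, h1, add_assoc]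
        gcongr
        calc ∑' k : ℕ, ENNReal.ofReal (c ^ (k+1+1) / Nat.factorial (k+1+1)) *
              ∫⁻ ω, ENNReal.ofReal (X ω ^ (2 * (k+1+1))) ∂μ
            ≤ ∑' k : ℕ, ENNReal.ofReal (8 * c^2 * σ^4 * (1/4)^k) := by
              apply ENNReal.tsum_le_tsum
              intro k
              have hM := aux_moment hX hσ hup hdown (k := k+1+1) (by omega)
              have hM' : ∫⁻ ω, ENNReal.ofReal (X ω ^ (2 * (k+1+1))) ∂μ ≤
                  ENNReal.ofReal (2 ^ (k+1+1+1) * σ ^ (2*(k+1+1)) * Nat.factorial (k+1+1)) := by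
                refine le_trans (le_of_eq (lintegral_congr fun ω => by
                  rw [← (even_two_mul (k+1+1)).pow_abs (X ω)])) hM
              calc ENNReal.ofReal (c ^ (k+1+1) / Nat.factorial (k+1+1)) *
                    ∫⁻ ω, ENNReal.ofReal (X ω ^ (2 * (k+1+1))) ∂μ
                  ≤ ENNReal.ofReal (c ^ (k+1+1) / Nat.factorial (k+1+1)) *
                    ENNReal.ofReal (2 ^ (k+1+1+1) * σ ^ (2*(k+1+1)) * Nat.factorial (k+1+1)) :=
                    mul_le_mul_right hM' _
                _ = ENNReal.ofReal (c ^ (k+1+1) / Nat.factorial (k+1+1) *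
                      (2 ^ (k+1+1+1) * σ ^ (2*(k+1+1)) * Nat.factorial (k+1+1))) :=
                    (ENNReal.ofReal_mul (by positivity)).symm
                _ ≤ ENNReal.ofReal (8 * c^2 * σ^4 * (1/4)^k) := by
                    apply ENNReal.ofReal_le_ofReal
                    have hfacpos : (0:ℝ) < Nat.factorial (k+1+1) := by
                      exact_mod_cast Nat.factorial_pos _
                    have key : c ^ (k+1+1) / (Nat.factorial (k+1+1) : ℝ) *
                        (2 ^ (k+1+1+1) * σ ^ (2*(k+1+1)) * (Nat.factorial (k+1+1) : ℝ)) =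
                        8 * c^2 * σ^4 * (2 * c * σ^2)^k := by
                      have e1 : σ ^ (2*(k+1+1)) = (σ^2)^k * σ^4 := by rw [pow_mul]; ring
                      have e2 : (2 * c * σ^2)^k = 2^k * c^k * (σ^2)^k := by
                        rw [mul_pow, mul_pow]
                      rw [e1, e2]
                      field_simp
                      ring
                    rw [key]
                    have h8 : (0:ℝ) < 8 * σ ^ 2 := by positivity
                    have hc' := hc
                    rw [le_div_iff₀ h8] at hc'
                    have hcs : 2 * c * σ ^ 2 ≤ 1/4 := by nlinarith
                    gcongr
                    all_goals positivity
            _ = ENNReal.ofReal (32/3 * c^2 * σ^4) := by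
              rw [← ENNReal.ofReal_tsum_of_nonneg (fun n => by positivity)]
              · congr 1
                rw [tsum_mul_left, tsum_geometric_of_lt_one (by norm_num) (by norm_num)]
                norm_num
                ring
              · apply Summable.mul_left
                exact summable_geometric_of_lt_one (by norm_num) (by norm_num)
    _ ≤ ENNReal.ofReal (1 + c * m + 32 / 3 * c ^ 2 * σ ^ 4) := by
        rw [← ENNReal.ofReal_add (by norm_num) (by positivity),
          ← ENNReal.ofReal_add (by positivity) (by positivity)]

lemma aux_exp (hX : Measurable X) (hσ : 0 < σ)
    (hup : ∀ s : ℝ, 0 < s → (μ {ω | s ≤ X ω}).toReal ≤ Real.exp (-s ^ 2 / (2 * σ ^ 2)))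
    (hdown : ∀ s : ℝ, 0 < s → (μ {ω | X ω ≤ -s}).toReal ≤ Real.exp (-s ^ 2 / (2 * σ ^ 2)))
    {c : ℝ} (hc0 : 0 ≤ c) (hc : c ≤ 1 / (8 * σ ^ 2)) :
    Integrable (fun ω => Real.exp (c * X ω ^ 2)) μ ∧
      ∫ ω, Real.exp (c * X ω ^ 2) ∂μ ≤
        1 + c * (∫ ω, X ω ^ (2 * 1) ∂μ) + 32 / 3 * c ^ 2 * σ ^ 4 := by
  have hlin := aux_expLin hX hσ hup hdown hc0 hc
  have hm_nn : 0 ≤ ∫ ω, X ω ^ (2 * 1) ∂μ :=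
    integral_nonneg fun ω => (even_two_mul 1).pow_nonneg _
  have hmble : Measurable fun ω => Real.exp (c * X ω ^ 2) :=
    (Real.measurable_exp).comp ((hX.pow_const 2).const_mul c)
  have hnn : ∀ ω, (0:ℝ) ≤ Real.exp (c * X ω ^ 2) := fun ω => (Real.exp_pos _).le
  have hInt : Integrable (fun ω => Real.exp (c * X ω ^ 2)) μ := by
    refine ⟨hmble.aestronglyMeasurable, ?_⟩
    rw [hasFiniteIntegral_iff_ofReal (Filter.Eventually.of_forall hnn)]
    exact lt_of_le_of_lt hlin ENNReal.ofReal_lt_top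
  refine ⟨hInt, ?_⟩
  rw [integral_eq_lintegral_of_nonneg_ae (Filter.Eventually.of_forall hnn)
    hmble.aestronglyMeasurable]
  exact ENNReal.toReal_le_of_le_ofReal (by positivity) hlin

lemma exp_le_quadratic {u : ℝ} (hu : u ≤ 0) : Real.exp u ≤ 1 + u + u ^ 2 / 2 := by
  set v : ℝ := -u with hv
  have hv0 : 0 ≤ v := by simp [hv]; linarith
  have h1 : 1 + v + v ^ 2 / 2 ≤ Real.exp v := by
    have h := Real.sum_le_exp_of_nonneg hv0 3
    simp [Finset.sum_range_succ, Nat.factorial] at h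
    convert h using 1
  have hpos : (0:ℝ) < 1 + v + v ^ 2 / 2 := by positivity
  have h2 : Real.exp u = (Real.exp v)⁻¹ := by
    rw [hv, Real.exp_neg, inv_inv]
  rw [h2]
  have h3 : (Real.exp v)⁻¹ ≤ (1 + v + v ^ 2 / 2)⁻¹ := by
    apply inv_anti₀ hpos h1
  refine h3.trans ?_
  have hid : (1 + v + v ^ 2 / 2) * (1 - v + v ^ 2 / 2) = 1 + v ^ 4 / 4 := by ring
  have : (1 + v + v ^ 2 / 2)⁻¹ ≤ 1 - v + v ^ 2 / 2 := by
    rw [inv_le_iff_one_le_mul₀ hpos]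
    nlinarith [pow_le_pow_left₀ hv0 (le_refl v) 4, sq_nonneg (v^2)]
  refine this.trans ?_
  have : u ^ 2 = v ^ 2 := by rw [hv]; ring
  rw [this, hv]
  ring_nf
  linarith [sq_nonneg v]

end aux


/-- For a zero-mean random variable `X` with Gaussian-type two-sided tail bounds of
parameter `σ`: all even moments satisfy `𝔼[X^{2k}] ≤ 2^{k+1} σ^{2k} k!`, and
`Z = X² − 𝔼[X²]` is sub-exponential with parameters `(8√2·σ², 8σ²)`, i.e.
`𝔼[exp(t Z)] ≤ exp((8√2 σ²)² t²/2) = exp(64 σ⁴ t²)` for all `|t| ≤ 1/(8σ²)`. -/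
theorem subExponential_of_square {Ω : Type*} [MeasurableSpace Ω]
    (μ : Measure Ω) [IsProbabilityMeasure μ]
    (X : Ω → ℝ) (hX : Measurable X)
    (hmean : ∫ ω, X ω ∂μ = 0)
    (σ : ℝ) (hσ : 0 < σ)
    (hup : ∀ s : ℝ, 0 < s → (μ {ω | s ≤ X ω}).toReal ≤ Real.exp (-s ^ 2 / (2 * σ ^ 2)))
    (hdown : ∀ s : ℝ, 0 < s → (μ {ω | X ω ≤ -s}).toReal ≤ Real.exp (-s ^ 2 / (2 * σ ^ 2))) :
    (∀ k : ℕ, 1 ≤ k →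
      Integrable (fun ω => X ω ^ (2 * k)) μ ∧
        ∫ ω, X ω ^ (2 * k) ∂μ ≤ 2 ^ (k + 1) * σ ^ (2 * k) * (Nat.factorial k)) ∧
    (∀ t : ℝ, |t| ≤ 1 / (8 * σ ^ 2) →
      Integrable (fun ω => Real.exp (t * (X ω ^ 2 - ∫ ω', X ω' ^ 2 ∂μ))) μ ∧
        ∫ ω, Real.exp (t * (X ω ^ 2 - ∫ ω', X ω' ^ 2 ∂μ)) ∂μ ≤
          Real.exp ((8 * Real.sqrt 2 * σ ^ 2) ^ 2 * t ^ 2 / 2)) := by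
  refine ⟨fun k hk => aux_moment' hX hσ hup hdown hk, fun t ht => ?_⟩
  set m : ℝ := ∫ ω', X ω' ^ 2 ∂μ with hmdef
  have h21 : (2 * 1 : ℕ) = 2 := by norm_num
  have hm_eq : (∫ ω, X ω ^ (2 * 1) ∂μ) = m := by rw [hmdef, h21]
  have hm2 := aux_moment' hX hσ hup hdown (k := 1) le_rfl
  have hm2i : Integrable (fun ω => X ω ^ 2) μ := by
    have := hm2.1; rwa [h21] at this
  have hm4 := aux_moment' hX hσ hup hdown (k := 2) one_le_two
  have h22 : (2 * 2 : ℕ) = 4 := by norm_num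
  have hm4i : Integrable (fun ω => X ω ^ 4) μ := by
    have := hm4.1; rwa [h22] at this
  have hm4b : ∫ ω, X ω ^ 4 ∂μ ≤ 16 * σ ^ 4 := by
    have h := hm4.2
    rw [h22] at h
    have : ((2:ℕ).factorial : ℝ) = 2 := by norm_num [Nat.factorial]
    rw [this] at h
    norm_num at h
    linarith
  have hm_nn : 0 ≤ m := by
    rw [hmdef]; exact integral_nonneg fun ω => sq_nonneg _
  have htb : t ≤ 1 / (8 * σ ^ 2) := le_trans (le_abs_self t) ht
  have hmble : Measurable fun ω => Real.exp (t * X ω ^ 2) :=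
    Real.measurable_exp.comp ((hX.pow_const 2).const_mul t)
  have key : Integrable (fun ω => Real.exp (t * X ω ^ 2)) μ ∧
      ∫ ω, Real.exp (t * X ω ^ 2) ∂μ ≤
        Real.exp (t * m + 32 / 3 * t ^ 2 * σ ^ 4) := by
    rcases le_or_gt 0 t with h0 | h0
    · obtain ⟨hI, hB⟩ := aux_exp hX hσ hup hdown h0 htb
      rw [hm_eq] at hB
      refine ⟨hI, hB.trans ?_⟩
      have := Real.add_one_le_exp (t * m + 32 / 3 * t ^ 2 * σ ^ 4)
      linarith
    · have hbdd : ∀ ω, Real.exp (t * X ω ^ 2) ≤ 1 := by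
        intro ω
        rw [show (1:ℝ) = Real.exp 0 from Real.exp_zero.symm]
        exact Real.exp_le_exp.mpr (mul_nonpos_of_nonpos_of_nonneg h0.le (sq_nonneg _))
      have hInt : Integrable (fun ω => Real.exp (t * X ω ^ 2)) μ := by
        apply Integrable.mono' (integrable_const (1:ℝ)) hmble.aestronglyMeasurable
        apply Filter.Eventually.of_forall
        intro ω
        rw [Real.norm_eq_abs, abs_of_pos (Real.exp_pos _)]
        exact hbdd ω
      refine ⟨hInt, ?_⟩
      have hptw : ∀ ω, Real.exp (t * X ω ^ 2) ≤ 1 + t * X ω ^ 2 + t ^ 2 * X ω ^ 4 / 2 := by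
        intro ω
        have h := exp_le_quadratic
          (mul_nonpos_of_nonpos_of_nonneg h0.le (sq_nonneg (X ω)))
        have e : (t * X ω ^ 2) ^ 2 = t ^ 2 * X ω ^ 4 := by ring
        rw [e] at h
        exact h
      have hRHSint : Integrable (fun ω => 1 + t * X ω ^ 2 + t ^ 2 * X ω ^ 4 / 2) μ :=
        ((integrable_const (1:ℝ)).add (hm2i.const_mul t)).add
          ((hm4i.const_mul (t ^ 2)).div_const 2)
      have hadd1 : ∫ ω, (1 + t * X ω ^ 2 + t ^ 2 * X ω ^ 4 / 2) ∂μ =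
          (∫ ω, (1 + t * X ω ^ 2) ∂μ) + ∫ ω, t ^ 2 * X ω ^ 4 / 2 ∂μ :=
        integral_add ((integrable_const (1:ℝ)).add (hm2i.const_mul t))
          ((hm4i.const_mul (t ^ 2)).div_const 2)
      have hi2 : ∫ ω, t * X ω ^ 2 ∂μ = t * m := by
        rw [integral_const_mul]
      have hadd2 : ∫ ω, (1 + t * X ω ^ 2) ∂μ = 1 + t * m := by
        rw [integral_add (integrable_const (1:ℝ)) (hm2i.const_mul t), integral_const, hi2]
        simp
      have hi4 : ∫ ω, t ^ 2 * X ω ^ 4 / 2 ∂μ = t ^ 2 * (∫ ω, X ω ^ 4 ∂μ) / 2 := by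
        rw [integral_div, integral_const_mul]
      have hI1 : ∫ ω, (1 + t * X ω ^ 2 + t ^ 2 * X ω ^ 4 / 2) ∂μ =
          1 + t * m + t ^ 2 * (∫ ω, X ω ^ 4 ∂μ) / 2 := by
        rw [hadd1, hadd2, hi4]
      calc ∫ ω, Real.exp (t * X ω ^ 2) ∂μ
          ≤ ∫ ω, (1 + t * X ω ^ 2 + t ^ 2 * X ω ^ 4 / 2) ∂μ :=
            integral_mono hInt hRHSint hptw
        _ = 1 + t * m + t ^ 2 * (∫ ω, X ω ^ 4 ∂μ) / 2 := hI1
        _ ≤ 1 + (t * m + 32 / 3 * t ^ 2 * σ ^ 4) := by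
            nlinarith [mul_le_mul_of_nonneg_left hm4b (sq_nonneg t),
              mul_nonneg (sq_nonneg t) (pow_nonneg hσ.le 4)]
        _ ≤ Real.exp (t * m + 32 / 3 * t ^ 2 * σ ^ 4) := by
            have := Real.add_one_le_exp (t * m + 32 / 3 * t ^ 2 * σ ^ 4)
            linarith
  have hfeq : (fun ω => Real.exp (t * (X ω ^ 2 - m))) =
      fun ω => Real.exp (-(t * m)) * Real.exp (t * X ω ^ 2) := by
    funext ω
    rw [← Real.exp_add]
    ring_nf
  constructor
  · rw [hfeq]
    exact key.1.const_mul _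
  · rw [hfeq]
    rw [integral_const_mul]
    have hsq2 : (Real.sqrt 2) ^ 2 = 2 := Real.sq_sqrt (by norm_num)
    have hexp_eq : (8 * Real.sqrt 2 * σ ^ 2) ^ 2 * t ^ 2 / 2 = 64 * σ ^ 4 * t ^ 2 := by
      rw [mul_pow, mul_pow, hsq2]
      ring
    rw [hexp_eq]
    calc Real.exp (-(t * m)) * ∫ ω, Real.exp (t * X ω ^ 2) ∂μ
        ≤ Real.exp (-(t * m)) * Real.exp (t * m + 32 / 3 * t ^ 2 * σ ^ 4) :=
          mul_le_mul_of_nonneg_left key.2 (Real.exp_pos _).le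
      _ = Real.exp (32 / 3 * t ^ 2 * σ ^ 4) := by
          rw [← Real.exp_add]; ring_nf
      _ ≤ Real.exp (64 * σ ^ 4 * t ^ 2) := by
          apply Real.exp_le_exp.mpr
          nlinarith [sq_nonneg t, pow_nonneg (sq_nonneg σ) 2, mul_nonneg (sq_nonneg t) (pow_nonneg (sq_nonneg σ) 2)]
end
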